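/- Each point of the symmetrised bidisc G lies on exactly one flat geodesic: for every (s,p) ∈ G there is a unique β in the open unit disc such that s = βp + conj(β). -/

import Mathlib

/-- The symmetrised bidisc. -/
def symBidisc : Set (ℂ × ℂ) :=
  {x | ∃ z w : ℂ, ‖z‖ < 1 ∧ ‖w‖ < 1 ∧ x = (z + w, z * w)}

/-- Each point of `G` lies on exactly one flat geodesic: for every `(s,p) ∈ G` there is a
unique `β` in the open unit disc with `s = βp + conj β`. -/
theorem stmt_4 (s p : ℂ) (h : (s, p) ∈ symBidisc) :
    ∃! β : ℂ, ‖β‖ < 1 ∧ s = β * p + (starRingEnd ℂ) β := by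
  obtain ⟨z, w, hz, hw, hx⟩ := h
  have hs : s = z + w := congrArg Prod.fst hx
  have hp : p = z * w := congrArg Prod.snd hx
  have hpn : ‖p‖ < 1 := by
    rw [hp, norm_mul]
    nlinarith [norm_nonneg z, norm_nonneg w]
  set d : ℂ := 1 - (starRingEnd ℂ p) * p with hd_def
  have hcp : (starRingEnd ℂ p) * p = ((‖p‖ ^ 2 : ℝ) : ℂ) := by
    rw [mul_comm, Complex.mul_conj, Complex.normSq_eq_norm_sq]
  have hd : d = ((1 - ‖p‖ ^ 2 : ℝ) : ℂ) := by
    rw [hd_def, hcp]; push_cast; ring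
  have hppos : (0:ℝ) < 1 - ‖p‖ ^ 2 := by nlinarith [norm_nonneg p]
  have hd0 : d ≠ 0 := by
    rw [hd]
    exact_mod_cast ne_of_gt (by exact_mod_cast hppos)
  have hdnorm : ‖d‖ = 1 - ‖p‖ ^ 2 := by
    rw [hd, Complex.norm_real, Real.norm_of_nonneg hppos.le]
  set β : ℂ := (starRingEnd ℂ s - s * starRingEnd ℂ p) / d with hβ
  have hconjd : starRingEnd ℂ d = d := by
    simp only [hd_def, map_sub, map_mul, map_one, Complex.conj_conj]
    ring
  have hnum : starRingEnd ℂ s - s * starRingEnd ℂ p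
      = starRingEnd ℂ z * (1 - w * starRingEnd ℂ w)
        + starRingEnd ℂ w * (1 - z * starRingEnd ℂ z) := by
    rw [hs, hp]
    simp only [map_add, map_mul]
    ring
  have hw2 : ‖(1 : ℂ) - w * starRingEnd ℂ w‖ = 1 - ‖w‖ ^ 2 := by
    have : (1 : ℂ) - w * starRingEnd ℂ w = ((1 - ‖w‖ ^ 2 : ℝ) : ℂ) := by
      rw [Complex.mul_conj, Complex.normSq_eq_norm_sq]
      push_cast; ring
    rw [this, Complex.norm_real, Real.norm_of_nonneg (by nlinarith [norm_nonneg w])]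
  have hz2 : ‖(1 : ℂ) - z * starRingEnd ℂ z‖ = 1 - ‖z‖ ^ 2 := by
    have : (1 : ℂ) - z * starRingEnd ℂ z = ((1 - ‖z‖ ^ 2 : ℝ) : ℂ) := by
      rw [Complex.mul_conj, Complex.normSq_eq_norm_sq]
      push_cast; ring
    rw [this, Complex.norm_real, Real.norm_of_nonneg (by nlinarith [norm_nonneg z])]
  have hnumnorm : ‖starRingEnd ℂ s - s * starRingEnd ℂ p‖
      ≤ ‖z‖ * (1 - ‖w‖ ^ 2) + ‖w‖ * (1 - ‖z‖ ^ 2) := by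
    rw [hnum]
    calc ‖starRingEnd ℂ z * (1 - w * starRingEnd ℂ w)
          + starRingEnd ℂ w * (1 - z * starRingEnd ℂ z)‖
        ≤ ‖starRingEnd ℂ z * (1 - w * starRingEnd ℂ w)‖
          + ‖starRingEnd ℂ w * (1 - z * starRingEnd ℂ z)‖ := norm_add_le _ _
      _ = ‖z‖ * (1 - ‖w‖ ^ 2) + ‖w‖ * (1 - ‖z‖ ^ 2) := by
          rw [norm_mul, norm_mul, RCLike.norm_conj, RCLike.norm_conj, hw2, hz2]
  have hβnorm : ‖β‖ < 1 := by
    rw [hβ, norm_div, hdnorm, div_lt_one hppos]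
    have hpzw : ‖p‖ = ‖z‖ * ‖w‖ := by rw [hp, norm_mul]
    rw [hpzw]
    have key : ‖z‖ * (1 - ‖w‖ ^ 2) + ‖w‖ * (1 - ‖z‖ ^ 2) < 1 - (‖z‖ * ‖w‖) ^ 2 := by
      nlinarith [mul_pos (mul_pos (sub_pos.mpr hz) (sub_pos.mpr hw))
        (sub_pos.mpr (show ‖z‖ * ‖w‖ < 1 by nlinarith [norm_nonneg z, norm_nonneg w])),
        norm_nonneg z, norm_nonneg w]
    exact lt_of_le_of_lt hnumnorm key
  have hβconj : starRingEnd ℂ β = (s - starRingEnd ℂ s * p) / d := by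
    rw [hβ, map_div₀, hconjd, map_sub, map_mul, Complex.conj_conj, Complex.conj_conj]
  refine ⟨β, ⟨hβnorm, ?_⟩, ?_⟩
  · rw [hβconj, hβ]
    field_simp
    ring
  · rintro β' ⟨-, he⟩
    have he2 := congrArg (starRingEnd ℂ) he
    simp only [map_add, map_mul, Complex.conj_conj] at he2
    rw [hβ, eq_div_iff hd0, hd_def]
    linear_combination (-1 : ℂ) * he2 + (starRingEnd ℂ p) * he
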